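/- arXiv:1009.1798 — 7 statements merged into one kernel-verified Lean document; each statement's English description precedes it below -/
import Mathlib

section
/- Let A be a finite abelian group, χ: A × A → S¹ a symmetric bilinear form, and μ: A → S¹ a quadratic map associated with χ. Let A⊥ = {a ∈ A : χ(a,b) = 1 for all b ∈ A}. If the restriction of μ to A⊥ is not identically 1, then the Gauss sum γ(μ) = |A|^{-1/2}|A⊥|^{-1/2} ∑_{a∈A} μ(a) equals 0. -/
/-- If the restriction of a quadratic map `μ` (associated with a symmetric
bilinear form `χ` on a finite abelian group `A`) to the annihilator
`A⊥ = {a | χ(a,b) = 1 ∀ b}` is not identically `1`, then the normalized Gauss sum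
`γ(μ) = |A|^{-1/2} |A⊥|^{-1/2} ∑_{a ∈ A} μ a` equals `0`. -/
theorem gauss_sum_eq_zero
    {A : Type*} [AddCommGroup A] [Fintype A]
    (χ : A → A → ℂ) (μ : A → ℂ)
    (hχ_unit : ∀ a b, ‖χ a b‖ = 1)
    (hχ_symm : ∀ a b, χ a b = χ b a)
    (hχ_bil : ∀ a b c, χ (a + b) c = χ a c * χ b c)
    (hμ_unit : ∀ a, ‖μ a‖ = 1)
    (hμ : ∀ a b, μ (a + b) = χ a b * μ a * μ b)
    (hne : ∃ a : A, (∀ b, χ a b = 1) ∧ μ a ≠ 1) :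
    ((Real.sqrt (Fintype.card A) : ℂ))⁻¹ *
      ((Real.sqrt (Nat.card {a : A // ∀ b, χ a b = 1}) : ℂ))⁻¹ *
      (∑ a : A, μ a) = 0 := by
  obtain ⟨a₀, ha₀, hμa₀⟩ := hne
  have key : (∑ a : A, μ a) = μ a₀ * ∑ a : A, μ a := by
    rw [Finset.mul_sum]
    rw [← Fintype.sum_equiv (Equiv.addRight a₀) _ _ (fun a => rfl)]
    refine Finset.sum_congr rfl fun a _ => ?_
    simp only [Equiv.coe_addRight]
    rw [hμ a a₀, hχ_symm, ha₀]
    ring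
  have hsum : (∑ a : A, μ a) = 0 := by
    by_contra h
    exact hμa₀ (by field_simp at key; exact key.symm)
  rw [hsum, mul_zero]
end

section
/- Let A be a finite abelian group, χ: A × A → S¹ a symmetric bilinear form, and μ: A → S¹ a quadratic map associated with χ. If μ(a) = 1 for all a in the annihilator A⊥ = {a : χ(a,b)=1 ∀b}, then the normalized Gauss sum γ(μ) = |A|^{-1/2}|A⊥|^{-1/2} ∑_{a∈A} μ(a) has absolute value 1. -/
/-- If a quadratic map `μ` associated with a symmetric bilinear form `χ` on
a finite abelian group `A` is identically `1` on the annihilator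
`A⊥ = {a | χ(a,b) = 1 ∀ b}`, then the normalized Gauss sum
`γ(μ) = |A|^{-1/2} |A⊥|^{-1/2} ∑_{a ∈ A} μ a` has absolute value `1`. -/
theorem gauss_sum_abs_one
    {A : Type*} [AddCommGroup A] [Fintype A]
    (χ : A → A → ℂ) (μ : A → ℂ)
    (hχ_unit : ∀ a b, ‖χ a b‖ = 1)
    (hχ_symm : ∀ a b, χ a b = χ b a)
    (hχ_bil : ∀ a b c, χ (a + b) c = χ a c * χ b c)
    (hμ_unit : ∀ a, ‖μ a‖ = 1)
    (hμ : ∀ a b, μ (a + b) = χ a b * μ a * μ b)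
    (htriv : ∀ a : A, (∀ b, χ a b = 1) → μ a = 1) :
    ‖(((Real.sqrt (Fintype.card A) : ℂ))⁻¹ *
      ((Real.sqrt (Nat.card {a : A // ∀ b, χ a b = 1}) : ℂ))⁻¹ *
      (∑ a : A, μ a))‖ = 1 := by
  classical
  set S := ∑ a : A, μ a with hS
  have hχ_ne : ∀ a b, χ a b ≠ 0 := by
    intro a b h
    have := hχ_unit a b
    simp [h] at this
  have hχ0 : ∀ b : A, χ 0 b = 1 := by
    intro b
    have h := hχ_bil 0 0 b
    rw [add_zero] at h
    have := hχ_ne 0 b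
    have h' : χ 0 b * χ 0 b = χ 0 b * 1 := by rw [mul_one, ← h]
    exact mul_left_cancel₀ this h'
  set T : A → ℂ := fun c => ∑ b : A, χ b c with hT
  have hTval : ∀ c : A, T c = if (∀ b, χ c b = 1) then (Fintype.card A : ℂ) else 0 := by
    intro c
    by_cases hc : ∀ b, χ c b = 1
    · simp only [hc, if_true]
      simp [hT, fun b => (hχ_symm b c).trans (hc b)]
    · simp only [hc, if_false]
      push_neg at hc
      obtain ⟨b0, hb0⟩ := hc
      have hb0' : χ b0 c ≠ 1 := fun h => hb0 ((hχ_symm c b0).trans h)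
      have key : χ b0 c * T c = T c := by
        rw [hT, Finset.mul_sum]
        exact Fintype.sum_equiv (Equiv.addLeft b0) _ _ (fun b => by
          simp [Equiv.addLeft, hχ_bil])
      have h0 : (χ b0 c - 1) * T c = 0 := by linear_combination key
      rcases mul_eq_zero.mp h0 with h | h
      · exact absurd (by linear_combination h) hb0'
      · exact h
  have hμconj : ∀ b : A, μ b * (starRingEnd ℂ) (μ b) = 1 := by
    intro b
    rw [Complex.mul_conj]
    rw [← Complex.sq_norm, hμ_unit]
    norm_num
  have hSabs : S * (starRingEnd ℂ) S =
      ((Fintype.card A : ℂ)) * (Fintype.card {a : A // ∀ b, χ a b = 1}) := by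
    rw [hS, map_sum, Finset.sum_mul_sum]
    have step1 : ∀ b : A, (∑ a : A, μ a * (starRingEnd ℂ) (μ b)) = ∑ c : A, χ b c * μ c := by
      intro b
      refine (Fintype.sum_equiv (Equiv.addLeft b) (fun c => χ b c * μ c)
        (fun a => μ a * (starRingEnd ℂ) (μ b)) (fun c => ?_)).symm
      have he : (Equiv.addLeft b) c = b + c := rfl
      rw [he]
      rw [hμ b c]
      linear_combination (-(χ b c * μ c)) * hμconj b
    calc ∑ a : A, ∑ b : A, μ a * (starRingEnd ℂ) (μ b)
        = ∑ b : A, ∑ a : A, μ a * (starRingEnd ℂ) (μ b) := Finset.sum_comm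
      _ = ∑ b : A, ∑ c : A, χ b c * μ c := by simp_rw [step1]
      _ = ∑ c : A, μ c * T c := by
          rw [Finset.sum_comm]
          simp [hT, Finset.mul_sum, mul_comm]
      _ = ∑ c : A, (if (∀ b, χ c b = 1) then (Fintype.card A : ℂ) else 0) := by
          refine Finset.sum_congr rfl fun c _ => ?_
          rw [hTval c]
          by_cases hc : ∀ b, χ c b = 1
          · simp [hc, htriv c hc]
          · simp [hc]
      _ = (Fintype.card A : ℂ) * (Fintype.card {a : A // ∀ b, χ a b = 1}) := by
          rw [Finset.sum_ite, Finset.sum_const_zero, add_zero, Finset.sum_const,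
            Fintype.card_subtype, nsmul_eq_mul, mul_comm]
  -- now extract real info
  have hm : (0 : ℝ) < Fintype.card A := by
    have : Nonempty A := ⟨0⟩
    exact_mod_cast Fintype.card_pos
  have hn : (0 : ℝ) < Fintype.card {a : A // ∀ b, χ a b = 1} := by
    have : Nonempty {a : A // ∀ b, χ a b = 1} := ⟨⟨0, hχ0⟩⟩
    exact_mod_cast Fintype.card_pos
  have hnormSq : Complex.normSq S =
      (Fintype.card A : ℝ) * (Fintype.card {a : A // ∀ b, χ a b = 1}) := by
    have := hSabs
    rw [Complex.mul_conj] at this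
    exact_mod_cast this
  have habsS : ‖S‖ =
      Real.sqrt ((Fintype.card A : ℝ) * (Fintype.card {a : A // ∀ b, χ a b = 1})) := by
    rw [Complex.norm_def, hnormSq]
  rw [norm_mul, norm_mul, norm_inv, norm_inv, Complex.norm_real, Complex.norm_real,
    habsS, Nat.card_eq_fintype_card, Real.norm_of_nonneg (Real.sqrt_nonneg _),
    Real.norm_of_nonneg (Real.sqrt_nonneg _), Real.sqrt_mul hm.le]
  have h1 : Real.sqrt (Fintype.card A) ≠ 0 := by positivity
  have h2 : Real.sqrt (Fintype.card {a : A // ∀ b, χ a b = 1}) ≠ 0 := by positivity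
  field_simp
end

section
/- Let A be a finite abelian group, χ: A × A → S¹ a symmetric bilinear form, and μ a quadratic map associated with χ. Then |A|·|A⊥|·|γ(μ)|² = |A| · ∑_{a ∈ A⊥} μ(a), where γ(μ) = |A|^{-1/2}|A⊥|^{-1/2} ∑_{a∈A} μ(a) and A⊥ is the annihilator of χ. Equivalently, |∑_{a∈A} μ(a)|² = |A| · ∑_{a ∈ A⊥} μ(a). -/
/-- For a quadratic map `μ` associated with a symmetric bilinear form `χ`
on a finite abelian group `A`, one has `|A|·|A⊥|·|γ(μ)|² = |A| · ∑_{a ∈ A⊥} μ a`, where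
`γ(μ) = |A|^{-1/2}|A⊥|^{-1/2} ∑_{a∈A} μ a`; equivalently
`|∑_{a∈A} μ a|² = |A| · ∑_{a ∈ A⊥} μ a`. -/
theorem gauss_sum_abs_sq
    {A : Type*} [AddCommGroup A] [Fintype A]
    (χ : A → A → ℂ) (μ : A → ℂ)
    (hχ_unit : ∀ a b, ‖χ a b‖ = 1)
    (hχ_symm : ∀ a b, χ a b = χ b a)
    (hχ_bil : ∀ a b c, χ (a + b) c = χ a c * χ b c)
    (hμ_unit : ∀ a, ‖μ a‖ = 1)
    (hμ : ∀ a b, μ (a + b) = χ a b * μ a * μ b) :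
    ((Fintype.card A : ℂ) * (Nat.card {a : A // ∀ b, χ a b = 1} : ℂ) *
        (‖((Real.sqrt (Fintype.card A) : ℂ))⁻¹ *
          ((Real.sqrt (Nat.card {a : A // ∀ b, χ a b = 1}) : ℂ))⁻¹ *
          (∑ a : A, μ a)‖)^2
      = (Fintype.card A : ℂ) * ∑ᶠ a ∈ {a : A | ∀ b, χ a b = 1}, μ a) ∧
    ((‖∑ a : A, μ a‖ : ℂ)^2
      = (Fintype.card A : ℂ) * ∑ᶠ a ∈ {a : A | ∀ b, χ a b = 1}, μ a) := by
  classical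
  -- χ 0 b = 1
  have hχ0 : ∀ b : A, χ 0 b = 1 := by
    intro b
    have h := hχ_bil 0 0 b
    rw [add_zero] at h
    have hne : χ 0 b ≠ 0 := by
      intro h0
      have := hχ_unit 0 b
      rw [h0] at this
      simp at this
    have h' : χ 0 b * 1 = χ 0 b * χ 0 b := by rw [mul_one]; exact h
    exact (mul_left_cancel₀ hne h').symm
  have hnorm : ∀ a : A, μ a * starRingEnd ℂ (μ a) = 1 := by
    intro a
    rw [Complex.mul_conj, ← Complex.sq_norm, hμ_unit]
    norm_num
  -- character sum
  have hchar : ∀ c : A, (∑ b : A, χ b c)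
      = if ∀ b, χ c b = 1 then (Fintype.card A : ℂ) else 0 := by
    intro c
    by_cases h : ∀ b, χ c b = 1
    · rw [if_pos h]
      have : ∀ b : A, χ b c = 1 := fun b => (hχ_symm b c).trans (h b)
      simp [this]
    · rw [if_neg h]
      push_neg at h
      obtain ⟨b₀, hb₀⟩ := h
      have hb₀' : χ b₀ c ≠ 1 := fun hc => hb₀ ((hχ_symm c b₀).trans hc)
      have key : χ b₀ c * ∑ b : A, χ b c = ∑ b : A, χ b c := by
        rw [Finset.mul_sum]
        exact Fintype.sum_equiv (Equiv.addLeft b₀) _ _ (fun b => by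
          simp only [Equiv.coe_addLeft]
          rw [hχ_bil])
      have : (χ b₀ c - 1) * ∑ b : A, χ b c = 0 := by
        rw [sub_mul, one_mul, key, sub_self]
      rcases mul_eq_zero.mp this with h1 | h2
      · exact absurd (by linear_combination h1) hb₀'
      · exact h2
  set S : ℂ := ∑ a : A, μ a with hS
  set T : Finset A := Finset.univ.filter (fun a => ∀ b, χ a b = 1) with hT
  -- main computation
  have hmain : ((‖S‖ : ℂ))^2 = (Fintype.card A : ℂ) * ∑ c ∈ T, μ c := by
    have h1 : ((‖S‖ : ℂ))^2 = S * starRingEnd ℂ S := by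
      rw [Complex.mul_conj, ← Complex.sq_norm, Complex.ofReal_pow]
    rw [h1, hS, map_sum, Finset.sum_mul_sum]
    have h2 : ∀ b : A, ∑ a : A, μ a * starRingEnd ℂ (μ b) = ∑ c : A, χ b c * μ c := by
      intro b
      refine (Fintype.sum_equiv (Equiv.addLeft b) _ _ (fun c => ?_)).symm
      simp only [Equiv.coe_addLeft]
      rw [hμ, show χ b c * μ b * μ c * starRingEnd ℂ (μ b)
        = χ b c * μ c * (μ b * starRingEnd ℂ (μ b)) from by ring, hnorm b, mul_one]
    rw [Finset.sum_comm]
    calc ∑ b : A, ∑ a : A, μ a * starRingEnd ℂ (μ b)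
        = ∑ b : A, ∑ c : A, χ b c * μ c := by
          exact Finset.sum_congr rfl (fun b _ => h2 b)
      _ = ∑ c : A, (∑ b : A, χ b c) * μ c := by
          rw [Finset.sum_comm]
          exact Finset.sum_congr rfl (fun c _ => by rw [Finset.sum_mul])
      _ = ∑ c : A, (if ∀ b, χ c b = 1 then (Fintype.card A : ℂ) * μ c else 0) := by
          refine Finset.sum_congr rfl (fun c _ => ?_)
          rw [hchar c]
          split_ifs <;> simp
      _ = ∑ c ∈ T, (Fintype.card A : ℂ) * μ c := by
          rw [hT, Finset.sum_filter]
      _ = (Fintype.card A : ℂ) * ∑ c ∈ T, μ c := by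
          rw [Finset.mul_sum]
  -- the finsum equals the finset sum
  have hset : {a : A | ∀ b, χ a b = 1} = (T : Set A) := by
    ext a; simp [hT]
  have hfin : (∑ᶠ a ∈ {a : A | ∀ b, χ a b = 1}, μ a) = ∑ c ∈ T, μ c := by
    rw [hset, finsum_mem_coe_finset]
  -- cardinalities
  have hcardA : (0 : ℝ) < (Fintype.card A : ℝ) := by
    exact_mod_cast Fintype.card_pos
  have hNonempty : Nonempty {a : A // ∀ b, χ a b = 1} := ⟨⟨0, hχ0⟩⟩
  have hcardB : (0 : ℝ) < (Nat.card {a : A // ∀ b, χ a b = 1} : ℝ) := by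
    exact_mod_cast Nat.card_pos
  constructor
  · rw [hfin, ← hmain]
    rw [norm_mul, norm_mul, norm_inv, norm_inv, Complex.norm_real, Complex.norm_real,
      Real.norm_eq_abs, Real.norm_eq_abs,
      abs_of_nonneg (Real.sqrt_nonneg _), abs_of_nonneg (Real.sqrt_nonneg _)]
    push_cast
    rw [mul_pow, mul_pow, inv_pow, inv_pow, ← Complex.ofReal_pow, ← Complex.ofReal_pow,
      Real.sq_sqrt hcardA.le, Real.sq_sqrt hcardB.le]
    have h1 : ((Fintype.card A : ℝ) : ℂ) ≠ 0 := by
      exact_mod_cast hcardA.ne'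
    have h2 : ((Nat.card {a : A // ∀ b, χ a b = 1} : ℝ) : ℂ) ≠ 0 := by
      exact_mod_cast hcardB.ne'
    push_cast at h1 h2 ⊢
    field_simp
  · rw [hfin, hmain]
end

section
/- Let (A, χ) be a bicharacter pair, μ₀ a fixed quadratic map associated with χ, and k an integer. Then for every quadratic map μ associated with χ there is a unique c ∈ A with μ(a) = χ(a,c)·μ₀(a) for all a ∈ A, and one has ζ_k(χ) = γ(μ₀^{-k}) · (γ(μ₀))^k, where ζ_k(χ) = |A|^{-1/2}|A_k|^{-1/2} ∑_{μ ∈ Q_χ} γ(μ)^k. -/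
/-- A bicharacter on a finite abelian group: a non-degenerate symmetric bilinear pairing
with values in the unit circle `S¹ ⊂ ℂ`; non-degeneracy means the adjoint map
`A → Hom(A, S¹)` is bijective. -/
def IsBicharacter {A : Type*} [AddCommGroup A] [Fintype A] (χ : A → A → ℂ) : Prop :=
  (∀ a b, ‖χ a b‖ = 1) ∧ (∀ a b, χ a b = χ b a) ∧
  (∀ a b c, χ (a + b) c = χ a c * χ b c) ∧
  Function.Injective (fun a : A => (fun b => χ a b)) ∧
  (∀ f : A → ℂ, (∀ a, ‖f a‖ = 1) → (∀ a b, f (a + b) = f a * f b) →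
    ∃ a : A, f = fun b => χ a b)

/-- The set `Q_χ` of quadratic maps associated with `χ`. -/
def QuadMaps {A : Type*} [AddCommGroup A] [Fintype A] (χ : A → A → ℂ) : Set (A → ℂ) :=
  {μ | (∀ a, ‖μ a‖ = 1) ∧ ∀ a b, μ (a + b) = χ a b * μ a * μ b}

/-- For a bicharacter pair `(A, χ)`, a fixed quadratic map `μ₀ ∈ Q_χ` and an
integer `k`: every `μ ∈ Q_χ` is `χ(·, c)·μ₀` for a unique `c ∈ A`, and
`ζ_k(χ) = γ(μ₀^{-k}) · γ(μ₀)^k`, where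
`ζ_k(χ) = |A|^{-1/2}|A_k|^{-1/2} ∑_{μ ∈ Q_χ} γ(μ)^k`,
`γ(μ) = |A|^{-1/2} ∑_a μ a` for `μ ∈ Q_χ` (the annihilator of `χ` is trivial), and
`γ(μ₀^{-k}) = |A|^{-1/2}|A_k|^{-1/2} ∑_a μ₀(a)^{-k}` (the annihilator of `χ^{-k}` is
`A_k = {a | k·a = 0}`). -/
theorem zeta_eq_gauss_product
    {A : Type*} [AddCommGroup A] [Fintype A]
    (χ : A → A → ℂ) (hχ : IsBicharacter χ)
    (μ₀ : A → ℂ) (hμ₀ : μ₀ ∈ QuadMaps χ) (k : ℤ) :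
    (∀ μ ∈ QuadMaps χ, ∃! c : A, ∀ a, μ a = χ a c * μ₀ a) ∧
    ((Real.sqrt (Fintype.card A) : ℂ))⁻¹ *
        ((Real.sqrt (Nat.card {a : A // k • a = 0}) : ℂ))⁻¹ *
        (∑ᶠ μ ∈ QuadMaps χ,
          (((Real.sqrt (Fintype.card A) : ℂ))⁻¹ * ∑ a : A, μ a) ^ k)
      = (((Real.sqrt (Fintype.card A) : ℂ))⁻¹ *
          ((Real.sqrt (Nat.card {a : A // k • a = 0}) : ℂ))⁻¹ *
          ∑ a : A, (μ₀ a) ^ (-k)) *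
        (((Real.sqrt (Fintype.card A) : ℂ))⁻¹ * ∑ a : A, μ₀ a) ^ k := by
  obtain ⟨habs, hsymm, haddl, hinj, hsurj⟩ := hχ
  obtain ⟨h0abs, h0add⟩ := hμ₀
  have hμ0ne : ∀ a, μ₀ a ≠ 0 := fun a h => by
    have := h0abs a; rw [h] at this; simp at this
  have hχne : ∀ a b, χ a b ≠ 0 := fun a b h => by
    have := habs a b; rw [h] at this; simp at this
  set m : A → (A → ℂ) := fun c a => χ a c * μ₀ a with hm
  have hmem : ∀ c, m c ∈ QuadMaps χ := by
    intro c
    refine ⟨fun a => by simp [hm, norm_mul, habs, h0abs], fun a b => ?_⟩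
    simp only [hm]
    rw [haddl, h0add]
    ring
  have hminj : Function.Injective m := by
    intro c c' h
    apply hinj
    funext a
    have ha : χ a c * μ₀ a = χ a c' * μ₀ a := congrFun h a
    have : χ a c = χ a c' := mul_right_cancel₀ (hμ0ne a) ha
    simp only []
    rw [hsymm c a, hsymm c' a, this]
  have hrange : QuadMaps χ = Set.range m := by
    ext μ
    constructor
    · rintro ⟨hab, hadd⟩
      obtain ⟨c, hc⟩ := hsurj (fun a => μ a * (μ₀ a)⁻¹)
        (fun a => by rw [norm_mul, norm_inv, hab, h0abs]; norm_num)
        (fun a b => by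
          show μ (a+b) * (μ₀ (a+b))⁻¹ = (μ a * (μ₀ a)⁻¹) * (μ b * (μ₀ b)⁻¹)
          rw [hadd, h0add, mul_inv, mul_inv]
          linear_combination (μ a * μ b * (μ₀ a)⁻¹ * (μ₀ b)⁻¹) * mul_inv_cancel₀ (hχne a b))
      refine ⟨c, ?_⟩
      funext a
      have := congrFun hc a
      simp only [hm]
      rw [hsymm a c, ← this]
      exact inv_mul_cancel_right₀ (hμ0ne a) (μ a)
    · rintro ⟨c, rfl⟩; exact hmem c
  constructor
  · intro μ hμ
    rw [hrange] at hμ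
    obtain ⟨c, rfl⟩ := hμ
    refine ⟨c, fun a => rfl, fun c' hc' => ?_⟩
    exact (hminj (funext hc')).symm
  · have key : ∀ c, ∑ a : A, χ a c * μ₀ a = (μ₀ c)⁻¹ * ∑ a : A, μ₀ a := by
      intro c
      have h1 : ∑ a : A, μ₀ (a + c) = ∑ a : A, μ₀ a :=
        Fintype.sum_equiv (Equiv.addRight c) _ _ (fun a => rfl)
      have h2 : ∑ a : A, μ₀ (a + c) = (∑ a : A, χ a c * μ₀ a) * μ₀ c := by
        rw [Finset.sum_mul]
        exact Finset.sum_congr rfl fun a _ => h0add a c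
      rw [h2] at h1
      rw [← h1, inv_mul_eq_div, mul_div_assoc, div_self (hμ0ne c), mul_one]
    rw [hrange, finsum_mem_range hminj, finsum_eq_sum_of_fintype]
    have hterm : ∀ c : A, (((Real.sqrt (Fintype.card A) : ℂ))⁻¹ * ∑ a : A, m c a) ^ k
        = (μ₀ c) ^ (-k) *
          (((Real.sqrt (Fintype.card A) : ℂ))⁻¹ * ∑ a : A, μ₀ a) ^ k := by
      intro c
      simp only [hm]
      rw [key c, zpow_neg, ← inv_zpow, ← mul_zpow]
      ring_nf
    rw [Finset.sum_congr rfl (fun c _ => hterm c), ← Finset.sum_mul]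
    ring
end

section
/- Let (A, χ) be a bicharacter pair. Then ζ₁(χ) = 1, where ζ₁(χ) = |A|^{-1} ∑_{μ ∈ Q_χ} γ(μ) (note A₁ = {0}). -/
/-- The normalized Gauss sum `γ(μ) = |A|^{-1/2} ∑_a μ a` of a quadratic map associated
with a non-degenerate form (whose annihilator is trivial). -/
noncomputable def gaussSum' {A : Type*} [AddCommGroup A] [Fintype A] (μ : A → ℂ) : ℂ :=
  ((Real.sqrt (Fintype.card A) : ℂ))⁻¹ * ∑ a : A, μ a

/-- `ζ_k(χ) = |A|^{-1/2} |A_k|^{-1/2} ∑_{μ ∈ Q_χ} γ(μ)^k`, where `A_k = {a | k·a = 0}`. -/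
noncomputable def zeta {A : Type*} [AddCommGroup A] [Fintype A]
    (χ : A → A → ℂ) (k : ℕ) : ℂ :=
  ((Real.sqrt (Fintype.card A) : ℂ))⁻¹ *
    ((Real.sqrt (Nat.card {a : A // k • a = 0}) : ℂ))⁻¹ *
    ∑ᶠ μ ∈ QuadMaps χ, (gaussSum' μ) ^ k


universe u
open Complex

section Aux

lemma circle_coe_zpow (z : Circle) (n : ℤ) : ((z ^ n : Circle) : ℂ) = (z : ℂ) ^ n := by
  have h := congrArg Units.val (map_zpow Circle.toUnits z n)
  simpa [Units.val_zpow_eq_zpow_val] using h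

noncomputable instance : DivisibleBy (Additive (ULift.{u} Circle)) ℤ where
  div a n := if hn : n = 0 then 0 else
    Additive.ofMul (ULift.up (Circle.exp (Complex.arg ((a.toMul.down : Circle) : ℂ) / n)))
  div_zero a := by simp
  div_cancel := fun {n} a hn => by
    simp only [dif_neg hn]
    apply Additive.toMul.injective
    rw [toMul_zsmul, toMul_ofMul]
    apply ULift.ext
    rw [ULift.pow_down]
    apply Circle.coe_injective
    rw [circle_coe_zpow, Circle.coe_exp]
    have hn' : (n : ℂ) ≠ 0 := Int.cast_ne_zero.mpr hn
    rw [← Complex.exp_int_mul]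
    have hw : ‖(((Additive.toMul a).down : Circle) : ℂ)‖ = 1 := Circle.norm_coe _
    have hx := Complex.norm_mul_exp_arg_mul_I (((Additive.toMul a).down : Circle) : ℂ)
    rw [hw, Complex.ofReal_one, one_mul] at hx
    push_cast
    rw [show ((n:ℂ)) * ((((((Additive.toMul a).down : Circle) : ℂ).arg : ℂ) / (n:ℂ)) * I)
        = ((((Additive.toMul a).down : Circle) : ℂ).arg : ℂ) * I by field_simp]
    exact hx

end Aux

section Exist


variable {A : Type u} [AddCommGroup A] [Fintype A]

/-- The twisted commutative group structure on `A × Circle` defined by a symmetric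
bilinear circle-valued pairing. -/
noncomputable def eCommGroup (χ' : A → A → Circle) (hsym : ∀ a b, χ' a b = χ' b a)
    (hzl : ∀ b, χ' 0 b = 1) (hadd : ∀ a b c, χ' (a + b) c = χ' a c * χ' b c) :
    CommGroup (A × ULift.{u} Circle) where
  mul x y := (x.1 + y.1, ULift.up (χ' x.1 y.1 * x.2.down * y.2.down))
  one := (0, ULift.up 1)
  inv x := (-x.1, ULift.up ((χ' x.1 (-x.1))⁻¹ * x.2.down⁻¹))
  mul_assoc x y z := by
    refine Prod.ext (add_assoc _ _ _) (ULift.ext _ _ ?_)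
    show χ' (x.1 + y.1) z.1 * (χ' x.1 y.1 * x.2.down * y.2.down) * z.2.down
       = χ' x.1 (y.1 + z.1) * x.2.down * (χ' y.1 z.1 * y.2.down * z.2.down)
    rw [hadd, hsym x.1 (y.1 + z.1), hadd, hsym y.1 x.1, hsym z.1 x.1]
    ac_rfl
  one_mul x := by
    refine Prod.ext (zero_add _) (ULift.ext _ _ ?_)
    show χ' 0 x.1 * 1 * x.2.down = x.2.down
    rw [hzl, one_mul, one_mul]
  mul_one x := by
    refine Prod.ext (add_zero _) (ULift.ext _ _ ?_)
    show χ' x.1 0 * x.2.down * 1 = x.2.down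
    rw [hsym, hzl, one_mul, mul_one]
  inv_mul_cancel x := by
    refine Prod.ext (neg_add_cancel _) (ULift.ext _ _ ?_)
    show χ' (-x.1) x.1 * ((χ' x.1 (-x.1))⁻¹ * x.2.down⁻¹) * x.2.down = 1
    rw [hsym]
    group
  mul_comm x y := by
    refine Prod.ext (add_comm _ _) (ULift.ext _ _ ?_)
    show χ' x.1 y.1 * x.2.down * y.2.down = χ' y.1 x.1 * y.2.down * x.2.down
    rw [hsym, mul_right_comm]

lemma exists_quadMap (χ : A → A → ℂ)
    (habs : ∀ a b, ‖χ a b‖ = 1)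
    (hsymm : ∀ a b, χ a b = χ b a)
    (haddl : ∀ a b c, χ (a + b) c = χ a c * χ b c) :
    ∃ μ, μ ∈ QuadMaps χ := by
  classical
  have hne : ∀ a b, χ a b ≠ 0 := by
    intro a b h
    have := habs a b
    rw [h] at this
    simp at this
  have hzl : ∀ b, χ 0 b = 1 := by
    intro b
    have h := haddl 0 0 b
    rw [add_zero] at h
    have h1 : χ 0 b * 1 = χ 0 b * χ 0 b := by rw [mul_one]; exact h
    exact (mul_left_cancel₀ (hne 0 b) h1).symm
  -- circle-valued version of χ
  let χ' : A → A → Circle := fun a b =>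
    ⟨χ a b, by
      show χ a b ∈ Metric.sphere (0 : ℂ) 1
      rw [mem_sphere_zero_iff_norm]; exact habs a b⟩
  have hχ'coe : ∀ a b, ((χ' a b : Circle) : ℂ) = χ a b := fun a b => rfl
  have hsym' : ∀ a b, χ' a b = χ' b a := fun a b => Circle.ext (hsymm a b)
  have hzl' : ∀ b, χ' 0 b = 1 := fun b => Circle.ext (hzl b)
  have hzr' : ∀ b, χ' b 0 = 1 := fun b => (hsym' b 0) ▸ hzl' b
  have hadd' : ∀ a b c, χ' (a + b) c = χ' a c * χ' b c := fun a b c =>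
    Circle.ext (haddl a b c)
  letI instE : CommGroup (A × ULift.{u} Circle) := eCommGroup χ' hsym' hzl' hadd'
  -- the inclusion of the circle, as an additive ℤ-linear map
  let ι : Additive (ULift.{u} Circle) →+ Additive (A × ULift.{u} Circle) :=
    { toFun := fun s => Additive.ofMul ((0, s.toMul) : A × ULift.{u} Circle)
      map_zero' := by
        apply Additive.toMul.injective
        show ((0, (1 : ULift.{u} Circle)) : A × ULift.{u} Circle) = (1 : A × ULift.{u} Circle)
        rfl
      map_add' := by
        intro s t
        apply Additive.toMul.injective
        show ((0, s.toMul * t.toMul) : A × ULift.{u} Circle)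
          = ((0, s.toMul) : A × ULift.{u} Circle) * (0, t.toMul)
        refine Prod.ext (by show (0:A) = 0 + 0; rw [zero_add]) (ULift.ext _ _ ?_)
        show (s.toMul.down * t.toMul.down : Circle) = χ' 0 0 * s.toMul.down * t.toMul.down
        rw [hzl', one_mul] }
  have hι : Function.Injective ι := by
    intro s t h
    have h2 := congrArg (fun x => (Additive.toMul x).2) h
    exact (Additive.toMul.injective (ULift.ext _ _ (congrArg ULift.down h2)))
  -- extend the identity using injectivity of the divisible group
  haveI : Module.Injective ℤ (Additive (ULift.{u} Circle)) :=
    (Module.Baer.of_divisible _).injective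
  obtain ⟨h, hh⟩ := Module.Injective.out ι.toIntLinearMap hι
    (AddMonoidHom.id (Additive (ULift.{u} Circle))).toIntLinearMap
  -- the retraction, multiplicatively
  let r : (A × ULift.{u} Circle) → Circle := fun e => (h (Additive.ofMul e)).toMul.down
  have hr_mul : ∀ x y : A × ULift.{u} Circle, r (x * y) = r x * r y := by
    intro x y
    show (h (Additive.ofMul (x * y))).toMul.down = _
    have : Additive.ofMul (x * y) = Additive.ofMul x + Additive.ofMul y := rfl
    rw [this, map_add]
    rfl
  have hr_ι : ∀ s : Circle, r ((0, ULift.up s) : A × ULift.{u} Circle) = s := by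
    intro s
    have := hh (Additive.ofMul (ULift.up s))
    have h2 := congrArg (fun x => x.toMul.down) this
    exact h2
  -- the quadratic map
  refine ⟨fun a => (((r ((a, ULift.up 1) : A × ULift.{u} Circle)))⁻¹ : Circle), ?_, ?_⟩
  · intro a
    simp [Circle.norm_coe]
  · intro a b
    have key : ((a, ULift.up 1) : A × ULift.{u} Circle) * (b, ULift.up 1)
        = ((a + b, ULift.up 1) : A × ULift.{u} Circle) * (0, ULift.up (χ' a b)) := by
      refine Prod.ext (by show a + b = a + b + 0; rw [add_zero]) (ULift.ext _ _ ?_)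
      show (χ' a b * 1 * 1 : Circle) = χ' (a + b) 0 * 1 * χ' a b
      rw [hzr', mul_one, mul_one, one_mul, one_mul]
    have h1 := hr_mul ((a, ULift.up 1) : A × ULift.{u} Circle) (b, ULift.up 1)
    have h2 := hr_mul ((a + b, ULift.up 1) : A × ULift.{u} Circle) (0, ULift.up (χ' a b))
    rw [key, h2, hr_ι] at h1
    -- h1 : r (a+b,1) * χ' a b = r (a,1) * r (b,1)
    have hC : (r ((a + b, ULift.up 1) : A × ULift.{u} Circle))⁻¹
        = χ' a b * ((r ((a, ULift.up 1) : A × ULift.{u} Circle))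
            * (r ((b, ULift.up 1) : A × ULift.{u} Circle)))⁻¹ := by
      rw [← h1]; group
    dsimp only
    rw [hC]
    simp only [Circle.coe_mul, Circle.coe_inv, hχ'coe, mul_inv]
    ring

end Exist


/-- For a bicharacter pair `(A, χ)`, `ζ₁(χ) = 1` (note `A₁ = {0}`). -/
theorem zeta_one_eq_one
    {A : Type*} [AddCommGroup A] [Fintype A]
    (χ : A → A → ℂ) (hχ : IsBicharacter χ) :
    zeta χ 1 = 1 := by
  classical
  obtain ⟨habs, hsymm, haddl, hinj, hsurj⟩ := hχ
  have hne : ∀ a b, χ a b ≠ 0 := by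
    intro a b h
    have := habs a b
    rw [h] at this
    simp at this
  have hzl : ∀ b, χ 0 b = 1 := by
    intro b
    have h := haddl 0 0 b
    rw [add_zero] at h
    have h1 : χ 0 b * 1 = χ 0 b * χ 0 b := by rw [mul_one]; exact h
    exact (mul_left_cancel₀ (hne 0 b) h1).symm
  have hzr : ∀ b, χ b 0 = 1 := fun b => by rw [hsymm]; exact hzl b
  obtain ⟨μ₀, hμabs, hμq⟩ := exists_quadMap χ habs hsymm haddl
  have hμne : ∀ a, μ₀ a ≠ 0 := by
    intro a h
    have := hμabs a
    rw [h] at this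
    simp at this
  have hμ0 : μ₀ 0 = 1 := by
    have h := hμq 0 0
    rw [add_zero, hzl, one_mul] at h
    have h1 : μ₀ 0 * 1 = μ₀ 0 * μ₀ 0 := by rw [mul_one]; exact h
    exact (mul_left_cancel₀ (hμne 0) h1).symm
  set g : A → (A → ℂ) := fun c => fun a => χ c a * μ₀ a with hg
  have hginj : Function.Injective g := by
    intro c c' hcc
    apply hinj
    funext b
    have hb := congrFun hcc b
    simp only [hg] at hb
    exact mul_right_cancel₀ (hμne b) hb
  have hQ : QuadMaps χ = Set.range g := by
    ext μ
    constructor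
    · rintro ⟨habs', hq'⟩
      have hf : ∀ a, ‖(fun a => μ a * (μ₀ a)⁻¹) a‖ = 1 := by
        intro a
        simp only [norm_mul, norm_inv, habs' a, hμabs a]
        norm_num
      have hfm : ∀ a b, (fun a => μ a * (μ₀ a)⁻¹) (a + b)
          = (fun a => μ a * (μ₀ a)⁻¹) a * (fun a => μ a * (μ₀ a)⁻¹) b := by
        intro a b
        simp only [hq' a b, hμq a b]
        field_simp [hne a b, hμne a, hμne b]
      obtain ⟨c, hc⟩ := hsurj _ hf hfm
      refine ⟨c, ?_⟩
      funext a
      have ha := congrFun hc a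
      simp only [hg]
      rw [← ha]
      exact inv_mul_cancel_right₀ (hμne a) (μ a)
    · rintro ⟨c, rfl⟩
      constructor
      · intro a
        simp only [hg, norm_mul, habs c a, hμabs a, mul_one]
      · intro a b
        simp only [hg]
        have : χ c (a + b) = χ c a * χ c b := by
          rw [hsymm, haddl, hsymm a c, hsymm b c]
        rw [this, hμq a b]
        ring
  have hchar : ∀ a : A, (∑ c : A, χ c a) = if a = 0 then (Fintype.card A : ℂ) else 0 := by
    intro a
    by_cases ha : a = 0
    · subst ha
      simp only [if_pos rfl]
      rw [Finset.sum_congr rfl (fun c _ => hzr c)]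
      simp
    · rw [if_neg ha]
      have hc₀ : ∃ c₀, χ c₀ a ≠ 1 := by
        by_contra hcon
        push_neg at hcon
        apply ha
        apply hinj
        funext b
        show χ a b = χ 0 b
        rw [hzl, hsymm]
        exact hcon b
      obtain ⟨c₀, hc₀⟩ := hc₀
      have hshift : ∑ c : A, χ (c₀ + c) a = ∑ c : A, χ c a :=
        Fintype.sum_equiv (Equiv.addLeft c₀) _ _ (fun c => rfl)
      have hfac : ∑ c : A, χ (c₀ + c) a = χ c₀ a * ∑ c : A, χ c a := by
        rw [Finset.mul_sum]
        exact Finset.sum_congr rfl (fun c _ => haddl c₀ c a)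
      have : (χ c₀ a - 1) * ∑ c : A, χ c a = 0 := by
        rw [sub_mul, one_mul, ← hfac, hshift, sub_self]
      rcases mul_eq_zero.mp this with h | h
      · exact absurd (by linear_combination h) hc₀
      · exact h
  have hsum : ∑ c : A, ∑ a : A, χ c a * μ₀ a = (Fintype.card A : ℂ) := by
    rw [Finset.sum_comm]
    have : ∀ a : A, ∑ c : A, χ c a * μ₀ a = (if a = 0 then (Fintype.card A : ℂ) else 0) * μ₀ a := by
      intro a
      rw [← Finset.sum_mul, hchar a]
    rw [Finset.sum_congr rfl (fun a _ => this a)]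
    rw [Finset.sum_eq_single 0]
    · rw [if_pos rfl, hμ0, mul_one]
    · intro b _ hb
      rw [if_neg hb, zero_mul]
    · intro h
      exact absurd (Finset.mem_univ 0) h
  have hcard1 : Nat.card {a : A // (1 : ℕ) • a = 0} = 1 := by
    have e : {a : A // (1 : ℕ) • a = 0} ≃ PUnit.{1} :=
      { toFun := fun _ => PUnit.unit
        invFun := fun _ => ⟨0, by simp⟩
        left_inv := fun x => Subtype.ext (by
          have h2 := x.2
          rw [one_nsmul] at h2
          exact h2.symm)
        right_inv := fun _ => rfl }
    rw [Nat.card_congr e]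
    simp
  have hfin : (∑ᶠ μ ∈ QuadMaps χ, (gaussSum' μ) ^ 1)
      = ((Real.sqrt (Fintype.card A) : ℂ))⁻¹ * (Fintype.card A : ℂ) := by
    rw [hQ, finsum_mem_range hginj, finsum_eq_sum_of_fintype]
    simp only [pow_one, gaussSum']
    rw [← Finset.mul_sum]
    rw [show (∑ i : A, ∑ a : A, g i a) = (Fintype.card A : ℂ) from by
      simp only [hg]; exact hsum]
  rw [zeta, hfin, hcard1]
  have hNpos : 0 < Fintype.card A := Fintype.card_pos
  have hs : (Real.sqrt (Fintype.card A) : ℂ) * (Real.sqrt (Fintype.card A) : ℂ)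
      = (Fintype.card A : ℂ) := by
    rw [← Complex.ofReal_mul, Real.mul_self_sqrt (by positivity)]
    norm_cast
  have hsne : (Real.sqrt (Fintype.card A) : ℂ) ≠ 0 := by
    have h0 : (0:ℝ) < (Fintype.card A : ℝ) := by exact_mod_cast hNpos
    simp only [ne_eq, Complex.ofReal_eq_zero]
    positivity
  simp only [Nat.cast_one, Real.sqrt_one, Complex.ofReal_one, inv_one, mul_one]
  have hNne : (Fintype.card A : ℂ) ≠ 0 := Nat.cast_ne_zero.mpr hNpos.ne'
  rw [← mul_assoc, ← mul_inv, hs, inv_mul_cancel₀ hNne]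
end

section
/- Let (A, χ) be a bicharacter pair and k ≥ 1 an integer. Then ζ_k(χ), defined as |A|^{-1/2}|A_k|^{-1/2} ∑_{μ∈Q_χ} γ(μ)^k, is either 0 or an 8-th complex root of unity. -/
open Finset Complex
open scoped ComplexConjugate

section helpers

variable {W : Type*} [AddCommGroup W]

lemma hom_zero (f : W → ℂ) (hf : ∀ x y, f (x + y) = f x * f y) (hne : ∀ x, f x ≠ 0) :
    f 0 = 1 := by
  have h := hf 0 0
  rw [add_zero] at h
  have : f 0 * 1 = f 0 * f 0 := by rw [mul_one]; exact h
  exact (mul_left_cancel₀ (hne 0) this).symm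

lemma hom_neg (f : W → ℂ) (hf : ∀ x y, f (x + y) = f x * f y) (hne : ∀ x, f x ≠ 0)
    (x : W) : f (-x) = (f x)⁻¹ := by
  have h : f x * f (-x) = 1 := by
    rw [← hf, add_neg_cancel, hom_zero f hf hne]
  field_simp [hne x] at h ⊢
  linear_combination h

lemma hom_nsmul (f : W → ℂ) (hf : ∀ x y, f (x + y) = f x * f y) (hne : ∀ x, f x ≠ 0)
    (c : ℕ) (x : W) : f (c • x) = f x ^ c := by
  induction c with
  | zero => simpa using hom_zero f hf hne
  | succ c ih => rw [succ_nsmul, hf, ih, pow_succ]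

lemma hom_zsmul (f : W → ℂ) (hf : ∀ x y, f (x + y) = f x * f y) (hne : ∀ x, f x ≠ 0)
    (c : ℤ) (x : W) : f (c • x) = f x ^ c := by
  cases c with
  | ofNat c => rw [Int.ofNat_eq_coe, natCast_zsmul, hom_nsmul f hf hne, zpow_natCast]
  | negSucc c =>
      rw [negSucc_zsmul, hom_neg f hf hne, hom_nsmul f hf hne, zpow_negSucc]

lemma hom_sum (f : W → ℂ) (hf : ∀ x y, f (x + y) = f x * f y) (hne : ∀ x, f x ≠ 0)
    {ι : Type*} (s : Finset ι) (g : ι → W) :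
    f (∑ i ∈ s, g i) = ∏ i ∈ s, f (g i) := by
  induction s using Finset.cons_induction with
  | empty => simpa using hom_zero f hf hne
  | cons a s ha ih => rw [Finset.sum_cons, Finset.prod_cons, hf, ih]

lemma char_sum_cases [Fintype W] (f : W → ℂ) (hf : ∀ x y, f (x + y) = f x * f y) :
    (∑ x, f x) = 0 ∨ ((∀ x, f x = 1) ∧ (∑ x, f x) = (Fintype.card W : ℂ)) := by
  by_cases h : ∀ x, f x = 1
  · right
    refine ⟨h, ?_⟩
    simp [h, Finset.card_univ]
  · left
    push_neg at h
    obtain ⟨x0, hx0⟩ := h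
    have key : f x0 * ∑ x, f x = ∑ x, f x := by
      rw [Finset.mul_sum]
      calc ∑ x, f x0 * f x = ∑ x, f (x0 + x) := by simp [hf]
        _ = ∑ x, f x := Fintype.sum_equiv (Equiv.addLeft x0) _ _ (fun x => rfl)
    have : (f x0 - 1) * ∑ x, f x = 0 := by linear_combination key
    rcases mul_eq_zero.1 this with h | h
    · exact absurd (by linear_combination h) hx0
    · exact h

lemma conj_eq_inv_of_abs (z : ℂ) (h : ‖z‖ = 1) : conj z = z⁻¹ := by
  have hz : z ≠ 0 := by
    intro h0; rw [h0] at h; simp at h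
  have : z * conj z = 1 := by
    rw [Complex.mul_conj]
    norm_cast
    rw [← Complex.sq_norm, h]; norm_num
  field_simp [hz] at this ⊢
  linear_combination this

lemma prod_zpow_sum {ι : Type*} (s : Finset ι) (z : ℂ) (hz : z ≠ 0) (e : ι → ℤ) :
    ∏ i ∈ s, z ^ e i = z ^ (∑ i ∈ s, e i) := by
  induction s using Finset.cons_induction with
  | empty => simp
  | cons a s ha ih => rw [Finset.prod_cons, Finset.sum_cons, ih, zpow_add₀ hz]

end helpers

section key4

open scoped ComplexConjugate

lemma key4 {W : Type*} [AddCommGroup W] [Fintype W] (n : ℕ) (hn : 0 < n)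
    (F : W → ℂ) (B : W → W → ℂ)
    (hFne : ∀ x, F x ≠ 0)
    (hconj : ∀ x, conj (F x) = (F x)⁻¹)
    (hadd : ∀ x y, F (x + y) = F x * F y * B x y)
    (hBaddl : ∀ x y z, B (x + y) z = B x z * B y z)
    (hBaddr : ∀ x y z, B x (y + z) = B x y * B x z)
    (hBne : ∀ x y, B x y ≠ 0)
    (hhom : ∀ (c : ℤ) (x : W), F (c • x) = F x ^ (c ^ 2))
    (hFord : ∀ x, F x ^ (2 * (n : ℤ)) = 1)
    (hker : ∀ x : W, (n : ℤ) • x = 0) :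
    conj ((∑ x, F x) ^ 4) = (∑ x, F x) ^ 4 := by
  classical
  -- four squares
  obtain ⟨a, b, c, d, habcd⟩ := Nat.sum_four_squares (2 * n - 1)
  have hA2 : (a : ℤ) ^ 2 + (b : ℤ) ^ 2 + (c : ℤ) ^ 2 + (d : ℤ) ^ 2 = 2 * (n : ℤ) - 1 := by
    have h1 : (1 : ℕ) ≤ 2 * n := by omega
    have := congrArg (fun t : ℕ => (t : ℤ)) habcd
    push_cast at this
    rw [this]
    omega
  -- quaternion matrix
  set m : Fin 4 → Fin 4 → ℤ :=
    ![![a, -b, -c, -d], ![b, a, -d, c], ![c, d, a, -b], ![d, -c, b, a]] with hm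
  have horto : ∀ j l : Fin 4, (∑ i, m i j * m i l) = if j = l then 2 * (n : ℤ) - 1 else 0 := by
    intro j l
    fin_cases j <;> fin_cases l <;>
      simp [hm, Fin.sum_univ_four] <;>
      first
        | ring1
        | linear_combination hA2
        | linear_combination -hA2
  -- the linear map
  set φ : (Fin 4 → W) → (Fin 4 → W) := fun x i => ∑ j, m i j • x j with hφ
  have hψφ : ∀ (x : Fin 4 → W) (j : Fin 4), (∑ i, m i j • φ x i) = -x j := by
    intro x j
    have h1 : (∑ i, m i j • φ x i) = ∑ l, (∑ i, m i j * m i l) • x l := by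
      simp only [hφ, Finset.smul_sum, smul_smul]
      rw [Finset.sum_comm]
      exact Finset.sum_congr rfl fun l _ => (Finset.sum_smul).symm
    rw [h1]
    have h2 : (∑ l, (∑ i, m i j * m i l) • x l)
        = ∑ l, (if j = l then 2 * (n : ℤ) - 1 else 0) • x l := by
      refine Finset.sum_congr rfl fun l _ => ?_
      rw [horto]
    rw [h2]
    have h3 : (∑ l, (if j = l then 2 * (n : ℤ) - 1 else 0) • x l)
        = (2 * (n : ℤ) - 1) • x j := by
      simp [ite_smul]
    rw [h3]
    have h2n : (2 * (n : ℤ)) • x j = 0 := by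
      rw [mul_smul]
      rw [hker]
      simp
    rw [sub_smul, h2n, zero_sub, one_smul]
  have hinj : Function.Injective φ := by
    intro x y hxy
    funext j
    have h1 := hψφ x j
    have h2 := hψφ y j
    rw [hxy] at h1
    exact (neg_inj.1 (h2.symm.trans h1)).symm
  have hbij : Function.Bijective φ := Finite.injective_iff_bijective.1 hinj
  -- B-power lemmas
  have hBzl : ∀ (c : ℤ) (x y : W), B (c • x) y = B x y ^ c := fun c x y =>
    hom_zsmul (fun t => B t y) (fun u v => hBaddl u v y) (fun u => hBne u y) c x
  have hBzr : ∀ (c : ℤ) (x y : W), B x (c • y) = B x y ^ c := fun c x y =>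
    hom_zsmul (fun t => B x t) (hBaddr x) (hBne x) c y
  have hBz : ∀ (e e' : ℤ) (x y : W), B (e • x) (e' • y) = B x y ^ (e * e') := by
    intro e e' x y
    rw [hBzl, hBzr, ← zpow_mul, mul_comm e' e]
  -- four-term expansion
  have e4 : ∀ p q r s : W, F (p + q + r + s) =
      F p * F q * F r * F s *
        (B p q * B p r * B q r * B p s * B q s * B r s) := by
    intro p q r s
    rw [hadd (p + q + r) s, hadd (p + q) r, hadd p q, hBaddl p q r, hBaddl (p + q) r s,
      hBaddl p q s]
    ring
  -- row expansion
  have hrow : ∀ (x : Fin 4 → W) (i : Fin 4), F (φ x i) =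
      (F (x 0) ^ ((m i 0) ^ 2) * F (x 1) ^ ((m i 1) ^ 2) * F (x 2) ^ ((m i 2) ^ 2) *
        F (x 3) ^ ((m i 3) ^ 2)) *
      (B (x 0) (x 1) ^ (m i 0 * m i 1) * B (x 0) (x 2) ^ (m i 0 * m i 2) *
        B (x 1) (x 2) ^ (m i 1 * m i 2) * B (x 0) (x 3) ^ (m i 0 * m i 3) *
        B (x 1) (x 3) ^ (m i 1 * m i 3) * B (x 2) (x 3) ^ (m i 2 * m i 3)) := by
    intro x i
    show F (∑ j, m i j • x j) = _
    rw [Fin.sum_univ_four, e4, hhom, hhom, hhom, hhom, hBz, hBz, hBz, hBz, hBz, hBz]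
  -- F to the power 2n-1 is conj F
  have hFconj : ∀ x : W, F x ^ (2 * (n : ℤ) - 1) = conj (F x) := by
    intro x
    rw [show (2 * (n : ℤ) - 1) = 2 * (n : ℤ) + (-1) by ring, zpow_add₀ (hFne x), hFord,
      one_mul, zpow_neg_one, hconj]
  -- main product identity
  have hprod : ∀ x : Fin 4 → W, (∏ i, F (φ x i)) = ∏ i, conj (F (x i)) := by
    intro x
    calc (∏ i, F (φ x i))
        = (∏ i, ((F (x 0) ^ ((m i 0) ^ 2) * F (x 1) ^ ((m i 1) ^ 2) * F (x 2) ^ ((m i 2) ^ 2) *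
            F (x 3) ^ ((m i 3) ^ 2)) *
          (B (x 0) (x 1) ^ (m i 0 * m i 1) * B (x 0) (x 2) ^ (m i 0 * m i 2) *
            B (x 1) (x 2) ^ (m i 1 * m i 2) * B (x 0) (x 3) ^ (m i 0 * m i 3) *
            B (x 1) (x 3) ^ (m i 1 * m i 3) * B (x 2) (x 3) ^ (m i 2 * m i 3)))) :=
          Finset.prod_congr rfl fun i _ => hrow x i
      _ = (F (x 0) ^ (∑ i, (m i 0) ^ 2) * F (x 1) ^ (∑ i, (m i 1) ^ 2) *
            F (x 2) ^ (∑ i, (m i 2) ^ 2) * F (x 3) ^ (∑ i, (m i 3) ^ 2)) *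
          (B (x 0) (x 1) ^ (∑ i, m i 0 * m i 1) * B (x 0) (x 2) ^ (∑ i, m i 0 * m i 2) *
            B (x 1) (x 2) ^ (∑ i, m i 1 * m i 2) * B (x 0) (x 3) ^ (∑ i, m i 0 * m i 3) *
            B (x 1) (x 3) ^ (∑ i, m i 1 * m i 3) * B (x 2) (x 3) ^ (∑ i, m i 2 * m i 3)) := by
          simp only [Finset.prod_mul_distrib]
          rw [prod_zpow_sum _ _ (hFne _), prod_zpow_sum _ _ (hFne _),
            prod_zpow_sum _ _ (hFne _), prod_zpow_sum _ _ (hFne _),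
            prod_zpow_sum _ _ (hBne _ _), prod_zpow_sum _ _ (hBne _ _),
            prod_zpow_sum _ _ (hBne _ _), prod_zpow_sum _ _ (hBne _ _),
            prod_zpow_sum _ _ (hBne _ _), prod_zpow_sum _ _ (hBne _ _)]
      _ = ∏ i, conj (F (x i)) := by
          have hdiag : ∀ j : Fin 4, (∑ i, m i j ^ 2) = 2 * (n : ℤ) - 1 := by
            intro j
            have : (∑ i, m i j ^ 2) = ∑ i, m i j * m i j := by
              refine Finset.sum_congr rfl fun i _ => sq (m i j)
            rw [this, horto, if_pos rfl]
          have hoff : ∀ j l : Fin 4, j ≠ l → (∑ i, m i j * m i l) = 0 := by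
            intro j l hjl
            rw [horto, if_neg hjl]
          rw [hdiag 0, hdiag 1, hdiag 2, hdiag 3, hoff 0 1 (by decide), hoff 0 2 (by decide),
            hoff 1 2 (by decide), hoff 0 3 (by decide), hoff 1 3 (by decide),
            hoff 2 3 (by decide)]
          simp only [zpow_zero, mul_one]
          rw [hFconj, hFconj, hFconj, hFconj, Fin.prod_univ_four]
  -- conclude
  have hsum4 : (∑ x, F x) ^ 4 = ∑ x : Fin 4 → W, ∏ i, F (x i) := Fintype.sum_pow F 4
  have hsum4' : (∑ x, conj (F x)) ^ 4 = ∑ x : Fin 4 → W, ∏ i, conj (F (x i)) :=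
    Fintype.sum_pow _ 4
  rw [map_pow, map_sum, hsum4', hsum4]
  calc (∑ x : Fin 4 → W, ∏ i, conj (F (x i)))
      = ∑ x : Fin 4 → W, ∏ i, F (φ x i) := by
        refine Finset.sum_congr rfl fun x _ => (hprod x).symm
    _ = ∑ x : Fin 4 → W, ∏ i, F (x i) := hbij.sum_comp (fun y => ∏ i, F (y i))

end key4

section mainproof

open scoped ComplexConjugate

-- auxiliary: c + 2 * c.choose 2 = c ^ 2
lemma choose_two_aux (c : ℕ) : c + 2 * c.choose 2 = c ^ 2 := by
  induction c with
  | zero => simp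
  | succ c ih =>
      rw [Nat.choose_succ_succ, Nat.choose_one_right]
      zify at ih ⊢
      linear_combination ih

set_option maxHeartbeats 3000000 in
/-- For a bicharacter pair `(A, χ)` and an integer `k ≥ 1`, the number
`ζ_k(χ)` is either `0` or an 8-th complex root of unity. -/
theorem zeta_zero_or_eighth_root
    {A : Type*} [AddCommGroup A] [Fintype A]
    (χ : A → A → ℂ) (hχ : IsBicharacter χ)
    (k : ℕ) (hk : 1 ≤ k) :
    zeta χ k = 0 ∨ (zeta χ k) ^ 8 = 1 := by
  classical
  rcases Set.eq_empty_or_nonempty (QuadMaps χ) with hQ | ⟨μ0, hμ0⟩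
  · left
    unfold zeta
    rw [hQ, finsum_mem_empty, mul_zero]
  obtain ⟨hab, hsym, haddl, hinj, hsurj⟩ := hχ
  obtain ⟨hμabs, hμadd⟩ := hμ0
  set n := Fintype.card A with hn
  have hn0 : 0 < n := Fintype.card_pos
  -- basic nonvanishing
  have hχne : ∀ a b, χ a b ≠ 0 := by
    intro a b h
    have := hab a b
    rw [h] at this
    simp at this
  have hμne : ∀ a, μ0 a ≠ 0 := by
    intro a h
    have := hμabs a
    rw [h] at this
    simp at this
  have haddr : ∀ a b c, χ a (b + c) = χ a b * χ a c := by
    intro a b c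
    rw [hsym, haddl, hsym b a, hsym c a]
  have hchi0l : ∀ b, χ 0 b = 1 := fun b =>
    hom_zero (fun a => χ a b) (fun x y => haddl x y b) (fun x => hχne x b)
  have hchi0r : ∀ a, χ a 0 = 1 := fun a => by rw [hsym, hchi0l]
  have hμzero : μ0 0 = 1 := by
    have h := hμadd 0 0
    rw [add_zero, hchi0l, one_mul] at h
    have : μ0 0 * 1 = μ0 0 * μ0 0 := by rw [mul_one]; exact h
    exact (mul_left_cancel₀ (hμne 0) this).symm
  have hsmul0 : ∀ a : A, n • a = 0 := fun a => by
    rw [hn]; exact card_nsmul_eq_zero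
  have hχpow : ∀ a b, χ a b ^ n = 1 := by
    intro a b
    have := hom_nsmul (fun t => χ t b) (fun x y => haddl x y b) (fun x => hχne x b) n a
    rw [hsmul0 a] at this
    rw [← this, hchi0l]
  -- orthogonality
  have hsum_c : ∀ s : A, (∑ c : A, χ c s) = if s = 0 then (n : ℂ) else 0 := by
    intro s
    by_cases hs : s = 0
    · simp [hs, hchi0r, hn]
    · rw [if_neg hs]
      rcases char_sum_cases (fun c => χ c s) (fun x y => haddl x y s) with h | ⟨h1, _⟩
      · exact h
      · exfalso
        apply hs
        apply hinj
        funext b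
        show χ s b = χ 0 b
        rw [hsym, h1 b, hchi0l]
  -- structure of QuadMaps
  have hQrange : QuadMaps χ = Set.range (fun c : A => fun a => χ c a * μ0 a) := by
    ext μ
    constructor
    · rintro ⟨h1, h2⟩
      obtain ⟨c, hc⟩ := hsurj (fun a => μ a * (μ0 a)⁻¹)
        (by
          intro a
          rw [norm_mul, norm_inv, h1, hμabs]
          norm_num)
        (by
          intro x y
          rw [h2, hμadd, mul_inv, mul_inv]
          field_simp [hχne x y, hμne x, hμne y])
      refine ⟨c, ?_⟩
      funext a
      have h5 := congrFun hc a
      show χ c a * μ0 a = μ a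
      calc χ c a * μ0 a = (μ a * (μ0 a)⁻¹) * μ0 a := by rw [h5]
        _ = μ a := by field_simp [hμne a]
    · rintro ⟨c, rfl⟩
      refine ⟨?_, ?_⟩
      · intro a
        simp only
        rw [norm_mul, hab, hμabs, one_mul]
      · intro a b
        simp only
        rw [haddr, hμadd]
        ring
  have hrinj : Function.Injective (fun c : A => fun a : A => χ c a * μ0 a) := by
    intro c c' h
    apply hinj
    funext b
    have := congrFun h b
    simp only at this
    exact mul_right_cancel₀ (hμne b) this
  -- the subgroup V
  let σ : (Fin k → A) →+ A :=
    { toFun := fun p => ∑ i, p i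
      map_zero' := by simp
      map_add' := by intro p q; simp [Finset.sum_add_distrib] }
  let V : AddSubgroup (Fin k → A) := σ.ker
  have hVmem : ∀ p : Fin k → A, p ∈ V ↔ (∑ i, p i) = 0 := fun p => Iff.rfl
  -- F and B
  let F : (Fin k → A) → ℂ := fun p => ∏ i, μ0 (p i)
  let Bf : (Fin k → A) → (Fin k → A) → ℂ := fun p q => ∏ i, χ (p i) (q i)
  have hFne : ∀ p, F p ≠ 0 := fun p => Finset.prod_ne_zero_iff.2 fun i _ => hμne _
  have hBne : ∀ p q, Bf p q ≠ 0 := fun p q => Finset.prod_ne_zero_iff.2 fun i _ => hχne _ _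
  have hFabs : ∀ p, ‖F p‖ = 1 := by
    intro p
    show ‖∏ i, μ0 (p i)‖ = 1
    rw [norm_prod]
    simp [hμabs]
  have hFconj : ∀ p, conj (F p) = (F p)⁻¹ := fun p => conj_eq_inv_of_abs _ (hFabs p)
  have hF0 : F 0 = 1 := by
    show (∏ _i : Fin k, μ0 0) = 1
    simp [hμzero]
  have hFadd : ∀ p q, F (p + q) = F p * F q * Bf p q := by
    intro p q
    show (∏ i, μ0 (p i + q i)) = (∏ i, μ0 (p i)) * (∏ i, μ0 (q i)) * ∏ i, χ (p i) (q i)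
    rw [← Finset.prod_mul_distrib, ← Finset.prod_mul_distrib]
    refine Finset.prod_congr rfl fun i _ => ?_
    rw [hμadd]
    ring
  have hBaddl : ∀ p q r, Bf (p + q) r = Bf p r * Bf q r := by
    intro p q r
    show (∏ i, χ (p i + q i) (r i)) = (∏ i, χ (p i) (r i)) * ∏ i, χ (q i) (r i)
    rw [← Finset.prod_mul_distrib]
    exact Finset.prod_congr rfl fun i _ => haddl _ _ _
  have hBaddr : ∀ p q r, Bf p (q + r) = Bf p q * Bf p r := by
    intro p q r
    show (∏ i, χ (p i) (q i + r i)) = (∏ i, χ (p i) (q i)) * ∏ i, χ (p i) (r i)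
    rw [← Finset.prod_mul_distrib]
    exact Finset.prod_congr rfl fun i _ => haddr _ _ _
  have hBord : ∀ p q, Bf p q ^ n = 1 := by
    intro p q
    show (∏ i, χ (p i) (q i)) ^ n = 1
    rw [← Finset.prod_pow]
    simp [hχpow]
  -- the character η and B on the diagonal
  obtain ⟨e, he⟩ := hsurj (fun a => μ0 a ^ 4 * (μ0 (a + a))⁻¹)
    (by
      intro a
      rw [norm_mul, norm_inv, norm_pow, hμabs, hμabs]
      norm_num)
    (by
      intro x y
      have h1 : μ0 (x + y) = χ x y * μ0 x * μ0 y := hμadd x y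
      have h2 : (x + y) + (x + y) = (x + x) + (y + y) := by abel
      have h3 : μ0 ((x + y) + (x + y)) = χ (x + x) (y + y) * μ0 (x + x) * μ0 (y + y) := by
        rw [h2, hμadd]
      have h4 : χ (x + x) (y + y) = χ x y ^ 4 := by
        rw [haddl, haddr]
        ring
      rw [h1, h3, h4]
      have hxx := hμne (x + x)
      have hyy := hμne (y + y)
      have hxy := hχne x y
      field_simp)
  have hηeq : ∀ a, μ0 a ^ 4 * (μ0 (a + a))⁻¹ = χ e a := fun a => congrFun he a
  have hBdiag : ∀ p ∈ V, Bf p p = F p ^ 2 := by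
    intro p hp
    have key : F p ^ 2 * (Bf p p)⁻¹ = 1 := by
      have h1 : F p ^ 2 * (Bf p p)⁻¹ = ∏ i, (μ0 (p i) ^ 2 * (χ (p i) (p i))⁻¹) := by
        show (∏ i, μ0 (p i)) ^ 2 * (∏ i, χ (p i) (p i))⁻¹ = _
        rw [← Finset.prod_pow, ← Finset.prod_inv_distrib, ← Finset.prod_mul_distrib]
      have h2 : ∀ a : A, μ0 a ^ 2 * (χ a a)⁻¹ = χ e a := by
        intro a
        have hχaa : χ a a = μ0 (a + a) * (μ0 a)⁻¹ * (μ0 a)⁻¹ := by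
          rw [hμadd a a]
          field_simp [hμne a]
        rw [hχaa, ← hηeq a]
        field_simp
      rw [h1]
      calc (∏ i, (μ0 (p i) ^ 2 * (χ (p i) (p i))⁻¹)) = ∏ i, χ e (p i) :=
            Finset.prod_congr rfl fun i _ => h2 (p i)
        _ = χ e (∑ i, p i) :=
            (hom_sum (fun t => χ e t) (haddr e) (fun t => hχne e t) Finset.univ p).symm
        _ = 1 := by rw [(hVmem p).1 hp, hchi0r]
    have hB := hBne p p
    field_simp at key
    linear_combination -key
  -- homogeneity of F on V
  have hFnsmul : ∀ (c : ℕ) (p : Fin k → A), F (c • p) = F p ^ c * Bf p p ^ (c.choose 2) := by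
    intro c p
    induction c with
    | zero => simp [hF0]
    | succ c ih =>
        have hBsm : Bf (c • p) p = Bf p p ^ c :=
          hom_nsmul (fun t => Bf t p) (fun u v => hBaddl u v p) (fun u => hBne u p) c p
        rw [succ_nsmul, hFadd, ih, hBsm, Nat.choose_succ_succ, Nat.choose_one_right]
        ring
  have hFhom_nat : ∀ p ∈ V, ∀ c : ℕ, F (c • p) = F p ^ (c ^ 2) := by
    intro p hp c
    rw [hFnsmul, hBdiag p hp, ← pow_mul, ← pow_add, ← choose_two_aux c]
  have hFneg : ∀ p ∈ V, F (-p) = F p := by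
    intro p hp
    have h1 : F p * F (-p) * Bf p (-p) = 1 := by
      rw [← hFadd, add_neg_cancel, hF0]
    have h2 : Bf p (-p) = (Bf p p)⁻¹ :=
      hom_neg (fun t => Bf p t) (hBaddr p) (hBne p) p
    rw [h2, hBdiag p hp] at h1
    have := hFne p
    field_simp at h1
    have h3 : F p * F (-p) = F p * F p := by rw [h1]
    exact mul_left_cancel₀ this h3
  have hFhom : ∀ p ∈ V, ∀ c : ℤ, F (c • p) = F p ^ (c ^ 2) := by
    intro p hp c
    cases c with
    | ofNat c =>
        rw [Int.ofNat_eq_coe, natCast_zsmul, hFhom_nat p hp c]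
        rw [show ((c : ℤ) ^ 2) = ((c ^ 2 : ℕ) : ℤ) by push_cast; ring, zpow_natCast]
    | negSucc c =>
        have h1 : (Int.negSucc c) • p = -((c + 1 : ℕ) • p) := by
          rw [negSucc_zsmul]
        have hmem : ((c + 1 : ℕ) • p) ∈ V := AddSubgroup.nsmul_mem V hp (c + 1)
        rw [h1, hFneg _ hmem, hFhom_nat p hp (c + 1)]
        rw [show ((Int.negSucc c) ^ 2) = (((c + 1) ^ 2 : ℕ) : ℤ) by
          rw [Int.negSucc_eq]; push_cast; ring, zpow_natCast]
  have hFord : ∀ p ∈ V, F p ^ (2 * (n : ℤ)) = 1 := by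
    intro p hp
    have : F p ^ (2 * (n : ℤ)) = (F p ^ 2) ^ (n : ℕ) := by
      rw [← zpow_natCast (F p ^ 2) n, ← zpow_natCast (F p) 2, ← zpow_mul]
      norm_num
    rw [this, ← hBdiag p hp, hBord]
  -- pass to the subtype
  let Fv : ↥V → ℂ := fun v => F ↑v
  let Bv : ↥V → ↥V → ℂ := fun v w => Bf ↑v ↑w
  have hreal : conj ((∑ v : ↥V, Fv v) ^ 4) = (∑ v : ↥V, Fv v) ^ 4 := by
    apply key4 n hn0 Fv Bv
    · exact fun v => hFne _
    · exact fun v => hFconj _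
    · intro v w
      show F ↑(v + w) = _
      rw [AddSubgroup.coe_add, hFadd]
    · intro v w z
      show Bf ↑(v + w) ↑z = _
      rw [AddSubgroup.coe_add, hBaddl]
    · intro v w z
      show Bf ↑v ↑(w + z) = _
      rw [AddSubgroup.coe_add, hBaddr]
    · exact fun v w => hBne _ _
    · intro c v
      show F ↑(c • v) = _
      rw [AddSubgroup.coe_zsmul]
      exact hFhom ↑v v.2 c
    · exact fun v => hFord ↑v v.2
    · intro v
      have : (n : ℤ) • v = 0 := by
        apply Subtype.ext
        rw [AddSubgroup.coe_zsmul, AddSubgroup.coe_zero, natCast_zsmul]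
        funext i
        exact hsmul0 _
      exact this
  set G : ℂ := ∑ v : ↥V, Fv v with hG
  -- step 1: the finsum equals a positive multiple of G
  have hstep1 : (∑ᶠ μ ∈ QuadMaps χ, (gaussSum' μ) ^ k)
      = ((Real.sqrt n : ℂ))⁻¹ ^ k * ((n : ℂ) * G) := by
    rw [hQrange, finsum_mem_range hrinj, finsum_eq_sum_of_fintype]
    have hγ : ∀ c : A, (gaussSum' (fun a => χ c a * μ0 a)) ^ k
        = ((Real.sqrt n : ℂ))⁻¹ ^ k * (∑ a : A, χ c a * μ0 a) ^ k := by
      intro c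
      rw [gaussSum', mul_pow, ← hn]
    rw [Finset.sum_congr rfl fun c _ => hγ c, ← Finset.mul_sum]
    congr 1
    -- ∑ c, (∑ a, χ c a * μ0 a) ^ k = n * G
    have hpow : ∀ c : A, (∑ a : A, χ c a * μ0 a) ^ k
        = ∑ p : Fin k → A, (χ c (∑ i, p i) * F p) := by
      intro c
      rw [Fintype.sum_pow]
      refine Finset.sum_congr rfl fun p _ => ?_
      rw [Finset.prod_mul_distrib]
      congr 1
      exact (hom_sum (fun t => χ c t) (haddr c) (fun t => hχne c t) Finset.univ p).symm
    rw [Finset.sum_congr rfl fun c _ => hpow c, Finset.sum_comm]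
    have hinner : ∀ p : Fin k → A, (∑ c : A, χ c (∑ i, p i) * F p)
        = (if (∑ i, p i) = 0 then (n : ℂ) else 0) * F p := by
      intro p
      rw [← Finset.sum_mul, hsum_c]
    rw [Finset.sum_congr rfl fun p _ => hinner p]
    have : (∑ p : Fin k → A, (if (∑ i, p i) = 0 then (n : ℂ) else 0) * F p)
        = ∑ p : Fin k → A, (if (∑ i, p i) = 0 then (n : ℂ) * F p else 0) := by
      refine Finset.sum_congr rfl fun p _ => ?_
      split <;> simp
    rw [this, ← Finset.sum_filter]
    rw [Finset.sum_subtype (Finset.univ.filter fun p : Fin k → A => (∑ i, p i) = 0)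
      (p := fun p => p ∈ V) (by intro p; simp [hVmem])]
    rw [← Finset.mul_sum]
  -- the subgroup A_k
  let Ak : AddSubgroup A :=
    { carrier := {a : A | k • a = 0}
      zero_mem' := by simp
      add_mem' := by
        intro a b ha hb
        simp only [Set.mem_setOf_eq] at *
        rw [smul_add, ha, hb, add_zero]
      neg_mem' := by
        intro a ha
        simp only [Set.mem_setOf_eq] at *
        rw [smul_neg, ha, neg_zero] }
  have hAkmem : ∀ a : A, a ∈ Ak ↔ k • a = 0 := fun a => Iff.rfl
  set m := Fintype.card ↥Ak with hm
  have hm0 : 0 < m := Fintype.card_pos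
  have i0 : Fin k := ⟨0, hk⟩
  -- cardinality of V
  have hcV : (Fintype.card ↥V) * n = n ^ k := by
    have hσsurj : Function.Surjective σ := by
      intro a
      refine ⟨Pi.single i0 a, ?_⟩
      show (∑ i, Pi.single i0 a i) = a
      simp [Finset.sum_pi_single]
    have h1 : Nat.card (Fin k → A) = Nat.card ((Fin k → A) ⧸ V) * Nat.card ↥V :=
      AddSubgroup.card_eq_card_quotient_mul_card_addSubgroup V
    have h2 : Nat.card ((Fin k → A) ⧸ V) = n := by
      rw [Nat.card_congr (QuotientAddGroup.quotientKerEquivOfSurjective σ hσsurj).toEquiv]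
      rw [Nat.card_eq_fintype_card]
    have h3 : Nat.card (Fin k → A) = n ^ k := by
      rw [Nat.card_eq_fintype_card, Fintype.card_fun, Fintype.card_fin]
    rw [h3, h2, Nat.card_eq_fintype_card] at h1
    rw [h1]
    ring
  -- Nat.card of the subtype in the statement
  have hm' : Nat.card {a : A // k • a = 0} = m := by
    rw [Nat.card_eq_fintype_card, hm]
    exact Fintype.card_congr (Equiv.subtypeEquivRight (fun a => (hAkmem a).symm))
  -- the inner character sums
  have hBvhom : ∀ z v w : ↥V, Bf ↑(v + w) ↑z = Bf ↑v ↑z * Bf ↑w ↑z := by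
    intro z v w
    rw [AddSubgroup.coe_add, hBaddl]
  have hinner : ∀ z : ↥V, (∑ v : ↥V, conj (Bv v z)) =
      if (∀ v : ↥V, Bv v z = 1) then (Fintype.card ↥V : ℂ) else 0 := by
    intro z
    by_cases hz : ∀ v : ↥V, Bv v z = 1
    · rw [if_pos hz]
      have : ∀ v : ↥V, conj (Bv v z) = 1 := by
        intro v; rw [hz v, map_one]
      simp [this, Finset.card_univ]
    · rw [if_neg hz]
      rcases char_sum_cases (fun v : ↥V => conj (Bv v z))
        (by
          intro v w
          show conj (Bf ↑(v + w) ↑z) = _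
          rw [hBvhom z v w, map_mul]) with h | ⟨h1, _⟩
      · exact h
      · exfalso
        apply hz
        intro v
        have h2 := congrArg conj (h1 v)
        simpa using h2
  -- characterization of the "diagonal" elements
  have hχsub : ∀ a b c : A, χ (a - b) c = χ a c * (χ b c)⁻¹ := by
    intro a b c
    rw [sub_eq_add_neg, haddl, hom_neg (fun t => χ t c) (fun x y => haddl x y c)
      (fun x => hχne x c)]
  have hdiagchar : ∀ z : ↥V, (∀ v : ↥V, Bv v z = 1) ↔
      ∃ d : ↥Ak, (↑z : Fin k → A) = fun _ => (↑d : A) := by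
    intro z
    constructor
    · intro hz
      have hzeq : ∀ i j : Fin k, (↑z : Fin k → A) i = (↑z : Fin k → A) j := by
        intro i j
        by_cases hij : i = j
        · rw [hij]
        · have key : ∀ w0 : A, χ ((↑z : Fin k → A) i - (↑z : Fin k → A) j) w0 = 1 := by
            intro w0
            set p : Fin k → A := Pi.single i w0 - Pi.single j w0 with hpdef
            have hpV : p ∈ V := by
              rw [hVmem]
              simp [hpdef, Finset.sum_sub_distrib, Finset.sum_pi_single]
            have hB1 : Bf p ↑z = 1 := hz ⟨p, hpV⟩
            have hsing : ∀ (l0 : Fin k) (w : A),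
                (∏ l, χ ((Pi.single l0 w : Fin k → A) l) ((↑z : Fin k → A) l)) = χ w ((↑z : Fin k → A) l0) := by
              intro l0 w
              rw [Finset.prod_eq_single l0
                (fun l _ hl => by rw [Pi.single_eq_of_ne hl, hchi0l])
                (fun h => absurd (Finset.mem_univ l0) h)]
              rw [Pi.single_eq_same]
            have hcomp : Bf p ↑z
                = χ w0 ((↑z : Fin k → A) i) * (χ w0 ((↑z : Fin k → A) j))⁻¹ := by
              show (∏ l, χ (p l) ((↑z : Fin k → A) l)) = _
              have : ∀ l, χ (p l) ((↑z : Fin k → A) l)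
                  = χ ((Pi.single i w0 : Fin k → A) l) ((↑z : Fin k → A) l) *
                    (χ ((Pi.single j w0 : Fin k → A) l) ((↑z : Fin k → A) l))⁻¹ := by
                intro l
                rw [hpdef]
                exact hχsub _ _ _
              rw [Finset.prod_congr rfl fun l _ => this l, Finset.prod_mul_distrib,
                Finset.prod_inv_distrib, hsing i w0, hsing j w0]
            rw [hχsub, hsym _ w0, hsym _ w0, ← hcomp, hB1]
          have heq0 : (fun b => χ ((↑z : Fin k → A) i - (↑z : Fin k → A) j) b)
              = (fun b => χ 0 b) := by
            funext b
            rw [key b, hchi0l]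
          have := hinj heq0
          exact sub_eq_zero.1 this
      have hd : k • ((↑z : Fin k → A) i0) = 0 := by
        have hzero : (∑ i, (↑z : Fin k → A) i) = 0 := (hVmem ↑z).1 z.2
        calc k • ((↑z : Fin k → A) i0) = ∑ _i : Fin k, (↑z : Fin k → A) i0 := by
              rw [Finset.sum_const, Finset.card_univ, Fintype.card_fin]
          _ = ∑ i, (↑z : Fin k → A) i := Finset.sum_congr rfl fun i _ => hzeq i0 i
          _ = 0 := hzero
      exact ⟨⟨(↑z : Fin k → A) i0, hd⟩, funext fun i => hzeq i i0⟩
    · rintro ⟨d, hd⟩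
      intro v
      show Bf ↑v ↑z = 1
      show (∏ l, χ ((↑v : Fin k → A) l) ((↑z : Fin k → A) l)) = 1
      rw [hd]
      calc (∏ l, χ ((↑v : Fin k → A) l) ((fun _ => (↑d : A)) l))
          = χ (∑ l, (↑v : Fin k → A) l) ↑d :=
            (hom_sum (fun t => χ t ↑d) (fun x y => haddl x y ↑d)
              (fun x => hχne x ↑d) Finset.univ _).symm
        _ = 1 := by rw [(hVmem ↑v).1 v.2, hchi0l]
  -- G * conj G
  have hGG : G * conj G
      = (Fintype.card ↥V : ℂ) * ∑ d : ↥Ak, conj (μ0 ↑d ^ k) := by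
    have hconjG : conj G = ∑ v : ↥V, conj (Fv v) := by rw [hG, map_sum]
    have hstep : G * conj G = ∑ v : ↥V, ∑ z : ↥V, conj (Fv z) * conj (Bv v z) := by
      rw [hG, hconjG, Finset.sum_mul_sum]
      refine Finset.sum_congr rfl fun v _ => ?_
      rw [← Equiv.sum_comp (Equiv.addLeft v) (fun w => Fv v * conj (Fv w))]
      refine Finset.sum_congr rfl fun z _ => ?_
      have hFvadd : Fv (v + z) = Fv v * Fv z * Bv v z := by
        show F ↑(v + z) = _
        rw [AddSubgroup.coe_add, hFadd]
      show Fv v * conj (Fv (v + z)) = _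
      rw [hFvadd, map_mul, map_mul]
      have hc : conj (Fv v) = (Fv v)⁻¹ := hFconj _
      rw [hc]
      have hvne : Fv v ≠ 0 := hFne _
      field_simp
    rw [hstep, Finset.sum_comm]
    have : ∀ z : ↥V, (∑ v : ↥V, conj (Fv z) * conj (Bv v z))
        = conj (Fv z) * ∑ v : ↥V, conj (Bv v z) := by
      intro z
      rw [Finset.mul_sum]
    rw [Finset.sum_congr rfl fun z _ => this z]
    rw [Finset.sum_congr rfl fun z _ => by rw [hinner z]]
    -- now split according to the diagonal condition
    have hsplit : ∀ z : ↥V, conj (Fv z) *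
        (if (∀ v : ↥V, Bv v z = 1) then (Fintype.card ↥V : ℂ) else 0)
        = if (∃ d : ↥Ak, (↑z : Fin k → A) = fun _ => (↑d : A))
            then (Fintype.card ↥V : ℂ) * conj (Fv z) else 0 := by
      intro z
      by_cases hz : ∀ v : ↥V, Bv v z = 1
      · rw [if_pos hz, if_pos ((hdiagchar z).1 hz)]
        ring
      · rw [if_neg hz, if_neg (fun h => hz ((hdiagchar z).2 h))]
        ring
    rw [Finset.sum_congr rfl fun z _ => hsplit z, ← Finset.sum_filter, Finset.mul_sum]
    -- biject with A_k
    refine Finset.sum_bij (i := fun (z : ↥V) hz =>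
      (⟨(↑z : Fin k → A) i0, by
        obtain ⟨d, hd⟩ := (Finset.mem_filter.1 hz).2
        rw [hd]
        exact d.2⟩ : ↥Ak)) ?_ ?_ ?_ ?_
    · intro z hz
      exact Finset.mem_univ _
    · intro z1 hz1 z2 hz2 h
      obtain ⟨d1, hd1⟩ := (Finset.mem_filter.1 hz1).2
      obtain ⟨d2, hd2⟩ := (Finset.mem_filter.1 hz2).2
      apply Subtype.ext
      rw [hd1, hd2]
      have h' := congrArg (fun t : ↥Ak => (↑t : A)) h
      simp only at h'
      rw [hd1, hd2] at h'
      simp only at h'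
      rw [h']
    · intro d _
      refine ⟨⟨fun _ => (↑d : A), ?_⟩, ?_, ?_⟩
      · rw [hVmem]
        rw [Finset.sum_const, Finset.card_univ, Fintype.card_fin]
        exact d.2
      · rw [Finset.mem_filter]
        exact ⟨Finset.mem_univ _, ⟨d, rfl⟩⟩
      · apply Subtype.ext
        rfl
    · intro z hz
      obtain ⟨d, hd⟩ := (Finset.mem_filter.1 hz).2
      have hFvz : Fv z = μ0 ((↑z : Fin k → A) i0) ^ k := by
        show (∏ l, μ0 ((↑z : Fin k → A) l)) = _
        rw [hd]
        simp only
        rw [Finset.prod_const, Finset.card_univ, Fintype.card_fin]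
      rw [hFvz]
  -- sum over A_k is 0 or m
  have hSd := char_sum_cases (fun d : ↥Ak => conj (μ0 ↑d ^ k))
    (by
      intro d e
      show conj (μ0 (↑d + ↑e) ^ k) = _
      rw [hμadd, mul_pow, mul_pow]
      have hχk : χ (↑d : A) ↑e ^ k = 1 := by
        have h := hom_nsmul (fun t => χ t (↑e : A)) (fun x y => haddl x y ↑e)
          (fun x => hχne x ↑e) k ↑d
        have hd0 : k • (↑d : A) = 0 := d.2
        rw [hd0] at h
        rw [← h, hchi0l]
      rw [hχk, one_mul, map_mul])
  -- express zeta
  have hzeta : zeta χ k = ((Real.sqrt n : ℝ) : ℂ)⁻¹ * ((Real.sqrt m : ℝ) : ℂ)⁻¹ *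
      (((Real.sqrt n : ℝ) : ℂ)⁻¹ ^ k * ((n : ℂ) * G)) := by
    unfold zeta
    rw [hm', ← hn, hstep1]
  by_cases hG0 : G = 0
  · left
    rw [hzeta, hG0]
    ring
  · right
    have hSd' : (∑ d : ↥Ak, conj (μ0 ↑d ^ k)) = (m : ℂ) := by
      rcases hSd with h | ⟨_, h⟩
      · exfalso
        apply hG0
        have h0 : G * conj G = 0 := by rw [hGG, h, mul_zero]
        rcases mul_eq_zero.1 h0 with h' | h'
        · exact h'
        · exact (starRingEnd ℂ).injective (by rw [h', map_zero])
      · rw [h, hm]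
    have hGG' : G * conj G = (Fintype.card ↥V : ℂ) * (m : ℂ) := by rw [hGG, hSd']
    have hG8 : G ^ 8 = ((Fintype.card ↥V : ℂ) * (m : ℂ)) ^ 4 := by
      have hrealG : conj (G ^ 4) = G ^ 4 := hreal
      calc G ^ 8 = G ^ 4 * conj (G ^ 4) := by rw [hrealG]; ring
        _ = G ^ 4 * (conj G) ^ 4 := by rw [map_pow]
        _ = (G * conj G) ^ 4 := by rw [mul_pow]
        _ = ((Fintype.card ↥V : ℂ) * (m : ℂ)) ^ 4 := by rw [hGG']
    have hs1 : ((Real.sqrt n : ℝ) : ℂ)⁻¹ ^ 2 = ((n : ℂ))⁻¹ := by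
      rw [inv_pow]
      congr 1
      norm_cast
      rw [Real.sq_sqrt (by positivity)]
    have hs2 : ((Real.sqrt m : ℝ) : ℂ)⁻¹ ^ 2 = ((m : ℂ))⁻¹ := by
      rw [inv_pow]
      congr 1
      norm_cast
      rw [Real.sq_sqrt (by positivity)]
    have hne_n : (n : ℂ) ≠ 0 := Nat.cast_ne_zero.2 hn0.ne'
    have hne_m : (m : ℂ) ≠ 0 := Nat.cast_ne_zero.2 hm0.ne'
    have hcVC : ((Fintype.card ↥V : ℕ) : ℂ) * (n : ℂ) = (n : ℂ) ^ k := by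
      have := congrArg (fun t : ℕ => (t : ℂ)) hcV
      push_cast at this
      exact this
    have expand : (((Real.sqrt n : ℝ) : ℂ)⁻¹ * ((Real.sqrt m : ℝ) : ℂ)⁻¹ *
        (((Real.sqrt n : ℝ) : ℂ)⁻¹ ^ k * ((n : ℂ) * G))) ^ 8
        = (((Real.sqrt n : ℝ) : ℂ)⁻¹ ^ 2) ^ 4 * (((Real.sqrt m : ℝ) : ℂ)⁻¹ ^ 2) ^ 4 *
          ((((Real.sqrt n : ℝ) : ℂ)⁻¹ ^ 2) ^ k) ^ 4 * (n : ℂ) ^ 8 * G ^ 8 := by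
      ring
    rw [hzeta, expand, hs1, hs2, hG8]
    have hXne : (n : ℂ) ^ k ≠ 0 := pow_ne_zero _ hne_n
    have hcne : ((Fintype.card ↥V : ℕ) : ℂ) ≠ 0 :=
      Nat.cast_ne_zero.2 Fintype.card_pos.ne'
    have h4 : (((Fintype.card ↥V : ℕ) : ℂ) * (n : ℂ)) ^ 4 = ((n : ℂ) ^ k) ^ 4 := by
      rw [hcVC]
    rw [show ((n : ℂ)⁻¹ ^ k) = ((n : ℂ) ^ k)⁻¹ from inv_pow _ _]
    field_simp
    linear_combination h4

end mainproof
end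

section
/- The invariant ζ_k is multiplicative under orthogonal sum: if (A, χ) and (A', χ') are bicharacter pairs, then ζ_k(χ ⊕ χ') = ζ_k(χ)·ζ_k(χ') for every integer k ≥ 1, where χ ⊕ χ' is the orthogonal sum form on A × A'. -/
section Aux

variable {A : Type*} [AddCommGroup A] [Fintype A]
variable {A' : Type*} [AddCommGroup A'] [Fintype A']

lemma abs_one_ne_zero {z : ℂ} (h : ‖z‖ = 1) : z ≠ 0 := by
  intro h0; rw [h0] at h; simp at h

lemma bichar_zero_left {χ : A → A → ℂ} (hχ : IsBicharacter χ) (b : A) : χ 0 b = 1 := by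
  have h := hχ.2.2.1 0 0 b
  simp only [add_zero] at h
  have hne : χ 0 b ≠ 0 := abs_one_ne_zero (hχ.1 0 b)
  have : χ 0 b * 1 = χ 0 b * χ 0 b := by rw [mul_one]; exact h
  exact (mul_left_cancel₀ hne this).symm

lemma bichar_zero_right {χ : A → A → ℂ} (hχ : IsBicharacter χ) (a : A) : χ a 0 = 1 := by
  rw [hχ.2.1 a 0]; exact bichar_zero_left hχ a

lemma quad_zero {χ : A → A → ℂ} (hχ : IsBicharacter χ) {μ : A → ℂ}
    (hμ : μ ∈ QuadMaps χ) : μ 0 = 1 := by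
  have h := hμ.2 0 0
  simp only [add_zero, bichar_zero_left hχ, one_mul] at h
  have hne : μ 0 ≠ 0 := abs_one_ne_zero (hμ.1 0)
  have : μ 0 * 1 = μ 0 * μ 0 := by rw [mul_one]; exact h
  exact (mul_left_cancel₀ hne this).symm

lemma quadMaps_finite {χ : A → A → ℂ} (hχ : IsBicharacter χ) : (QuadMaps χ).Finite := by
  rcases Set.eq_empty_or_nonempty (QuadMaps χ) with h | ⟨μ₀, hμ₀⟩
  · simp [h]
  · apply Set.Finite.subset (Set.finite_range (fun c : A => fun a => χ c a * μ₀ a))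
    intro μ hμ
    have hchar : ∃ c, (fun a => μ a / μ₀ a) = fun b => χ c b := by
      apply hχ.2.2.2.2
      · intro a; rw [norm_div, hμ.1, hμ₀.1]; norm_num
      · intro a b
        have h1 := hμ.2 a b
        have h2 := hμ₀.2 a b
        have hne : χ a b ≠ 0 := abs_one_ne_zero (hχ.1 a b)
        have hμ₀a : μ₀ a ≠ 0 := abs_one_ne_zero (hμ₀.1 a)
        have hμ₀b : μ₀ b ≠ 0 := abs_one_ne_zero (hμ₀.1 b)
        rw [h1, h2]
        field_simp
    obtain ⟨c, hc⟩ := hchar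
    refine ⟨c, ?_⟩
    funext a
    have := congrFun hc a
    have hμ₀a : μ₀ a ≠ 0 := abs_one_ne_zero (hμ₀.1 a)
    rw [div_eq_iff hμ₀a] at this
    exact this.symm

lemma quadMaps_prod {χ : A → A → ℂ} (hχ : IsBicharacter χ)
    {χ' : A' → A' → ℂ} (hχ' : IsBicharacter χ') :
    QuadMaps (fun p q : A × A' => χ p.1 q.1 * χ' p.2 q.2) =
      (fun q : (A → ℂ) × (A' → ℂ) => fun p : A × A' => q.1 p.1 * q.2 p.2) ''
        (QuadMaps χ ×ˢ QuadMaps χ') := by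
  ext μ
  constructor
  · intro hμ
    refine ⟨(fun a => μ (a, 0), fun a' => μ (0, a')), ⟨⟨?_, ?_⟩, ⟨?_, ?_⟩⟩, ?_⟩
    · intro a; exact hμ.1 (a, 0)
    · intro a b
      have h := hμ.2 (a, 0) (b, 0)
      simpa [Prod.mk_add_mk, bichar_zero_left hχ'] using h
    · intro a'; exact hμ.1 (0, a')
    · intro a' b'
      have h := hμ.2 (0, a') (0, b')
      simpa [Prod.mk_add_mk, bichar_zero_left hχ] using h
    · funext p
      have h := hμ.2 (p.1, 0) (0, p.2)
      simpa [Prod.mk_add_mk, bichar_zero_right hχ, bichar_zero_left hχ'] using h.symm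
  · rintro ⟨⟨μ₁, μ₂⟩, ⟨h1, h2⟩, rfl⟩
    have h1' : μ₁ ∈ QuadMaps χ := h1
    have h2' : μ₂ ∈ QuadMaps χ' := h2
    constructor
    · intro p; rw [norm_mul, h1'.1, h2'.1, one_mul]
    · intro p q
      show μ₁ ((p + q).1) * μ₂ ((p + q).2) = _
      rw [Prod.fst_add, Prod.snd_add, h1'.2, h2'.2]
      ring

lemma gaussSum'_prod (μ : A → ℂ) (ν : A' → ℂ) :
    gaussSum' (fun p : A × A' => μ p.1 * ν p.2) = gaussSum' μ * gaussSum' ν := by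
  unfold gaussSum'
  rw [Fintype.card_prod, Nat.cast_mul,
    Real.sqrt_mul (by positivity : (0:ℝ) ≤ (Fintype.card A : ℝ)),
    Complex.ofReal_mul, mul_inv, Fintype.sum_prod_type, ← Finset.sum_mul_sum]
  ring

lemma torsion_card_prod (k : ℕ) :
    Nat.card {p : A × A' // k • p = 0} =
      Nat.card {a : A // k • a = 0} * Nat.card {a' : A' // k • a' = 0} := by
  rw [← Nat.card_prod]
  exact Nat.card_congr
    ((Equiv.subtypeEquivRight (fun p => by simp [Prod.ext_iff])).trans
      (Equiv.subtypeProdEquivProd))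

end Aux

/-- `ζ_k` is multiplicative under orthogonal sum of bicharacter pairs:
`ζ_k(χ ⊕ χ') = ζ_k(χ) · ζ_k(χ')` for all `k ≥ 1`, where
`(χ ⊕ χ')((a,a'),(b,b')) = χ(a,b)·χ'(a',b')` on `A × A'`. -/
theorem zeta_multiplicative
    {A A' : Type*} [AddCommGroup A] [Fintype A] [AddCommGroup A'] [Fintype A']
    (χ : A → A → ℂ) (hχ : IsBicharacter χ)
    (χ' : A' → A' → ℂ) (hχ' : IsBicharacter χ')
    (k : ℕ) (hk : 1 ≤ k) :
    zeta (fun p q : A × A' => χ p.1 q.1 * χ' p.2 q.2) k = zeta χ k * zeta χ' k := by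
  have hS : (QuadMaps χ).Finite := quadMaps_finite hχ
  have hS' : (QuadMaps χ').Finite := quadMaps_finite hχ'
  have hinj : Set.InjOn (fun q : (A → ℂ) × (A' → ℂ) => fun p : A × A' => q.1 p.1 * q.2 p.2)
      (QuadMaps χ ×ˢ QuadMaps χ') := by
    intro q hq q' hq' heq
    have hq2 : q.2 0 = 1 := quad_zero hχ' hq.2
    have hq'2 : q'.2 0 = 1 := quad_zero hχ' hq'.2
    have hq1 : q.1 0 = 1 := quad_zero hχ hq.1
    have hq'1 : q'.1 0 = 1 := quad_zero hχ hq'.1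
    have e1 : q.1 = q'.1 := by
      funext a
      have := congrFun heq (a, 0)
      simpa [hq2, hq'2] using this
    have e2 : q.2 = q'.2 := by
      funext a'
      have := congrFun heq (0, a')
      simpa [hq1, hq'1] using this
    exact Prod.ext e1 e2
  have key : (∑ᶠ μ ∈ QuadMaps (fun p q : A × A' => χ p.1 q.1 * χ' p.2 q.2),
        (gaussSum' μ) ^ k)
      = (∑ᶠ μ ∈ QuadMaps χ, (gaussSum' μ) ^ k) * (∑ᶠ ν ∈ QuadMaps χ', (gaussSum' ν) ^ k) := by
    rw [quadMaps_prod hχ hχ', finsum_mem_image hinj,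
      finsum_mem_eq_finite_toFinset_sum _ (hS.prod hS'),
      finsum_mem_eq_finite_toFinset_sum _ hS,
      finsum_mem_eq_finite_toFinset_sum _ hS',
      ← Set.Finite.toFinset_prod hS hS', Finset.sum_product, Finset.sum_mul_sum]
    refine Finset.sum_congr rfl fun μ _ => Finset.sum_congr rfl fun ν _ => ?_
    rw [gaussSum'_prod, mul_pow]
  show ((Real.sqrt (Fintype.card (A × A')) : ℂ))⁻¹ *
      ((Real.sqrt (Nat.card {p : A × A' // k • p = 0}) : ℂ))⁻¹ * _ = _
  rw [key, Fintype.card_prod, torsion_card_prod, Nat.cast_mul, Nat.cast_mul,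
    Real.sqrt_mul (by positivity : (0:ℝ) ≤ (Fintype.card A : ℝ)),
    Real.sqrt_mul (by positivity : (0:ℝ) ≤ (Nat.card {a : A // k • a = 0} : ℝ)),
    Complex.ofReal_mul, Complex.ofReal_mul, mul_inv, mul_inv]
  unfold zeta
  ring
end
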